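/- Let G be a finite group and let f : G → ℂ be an S-character of G distinct from the constant function 1. Then there exists g ∈ G such that f(g) = 0. -/

import Mathlib

open Module LinearMap in
lemma aux_trace_pow {V : Type*} [AddCommGroup V] [Module ℂ V] [FiniteDimensional ℂ V]
    (A : Module.End ℂ V) {n : ℕ} (hn : 0 < n) (hA : A ^ n = 1) :
    ∃ D : Multiset ℂ, (∀ μ ∈ D, μ ^ n = 1) ∧
      ∀ k : ℕ, LinearMap.trace ℂ V (A ^ k) = (D.map (· ^ k)).sum := by
  classical
  have hInd := A.independent_maxGenEigenspace
  have hSup := Module.End.iSup_maxGenEigenspace_eq_top A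
  have hInt := DirectSum.isInternal_submodule_of_iSupIndep_of_iSup_eq_top hInd hSup
  have hFin : {μ : ℂ | A.maxGenEigenspace μ ≠ ⊥}.Finite :=
    WellFoundedGT.finite_ne_bot_of_iSupIndep hInd
  have hmapsA : ∀ μ : ℂ, ∀ x ∈ A.maxGenEigenspace μ, A x ∈ A.maxGenEigenspace μ :=
    fun μ x hx => Module.End.mapsTo_maxGenEigenspace_of_comm (Commute.refl A) μ hx
  have key : ∀ (μ : ℂ) (k : ℕ), LinearMap.trace ℂ (A.maxGenEigenspace μ) ((A.restrict (hmapsA μ)) ^ k)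
      = μ ^ k * (finrank ℂ (A.maxGenEigenspace μ) : ℂ) := by
    intro μ k
    set W := A.maxGenEigenspace μ with hW
    set N : Module.End ℂ W := A.restrict (hmapsA μ) - algebraMap ℂ _ μ with hN
    have hmapsS : ∀ x ∈ W, (A - algebraMap ℂ (Module.End ℂ V) μ) x ∈ W :=
      fun x hx => Module.End.mapsTo_maxGenEigenspace_of_comm (Algebra.mul_sub_algebraMap_commutes A μ) μ hx
    have hNeq : (A - algebraMap ℂ (Module.End ℂ V) μ).restrict hmapsS = N := by
      ext x
      simp [hN, LinearMap.restrict_apply, Module.algebraMap_end_apply, LinearMap.sub_apply]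
    have hnil : IsNilpotent N := by
      rw [← hNeq]
      exact Module.End.isNilpotent_restrict_maxGenEigenspace_sub_algebraMap A μ _
    have hBeq : A.restrict (hmapsA μ) = algebraMap ℂ (Module.End ℂ W) μ + N := by rw [hN]; abel
    rw [hBeq, Commute.add_pow (Algebra.commutes μ N), map_sum, Finset.sum_range_succ]
    have hzero : ∀ m ∈ Finset.range k,
        LinearMap.trace ℂ W (algebraMap ℂ (Module.End ℂ W) μ ^ m * N ^ (k - m) * (k.choose m : Module.End ℂ W)) = 0 := by
      intro m hm
      have hmk : k - m ≠ 0 := Nat.sub_ne_zero_of_lt (Finset.mem_range.mp hm)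
      have h1 : IsNilpotent (N ^ (k - m)) := hnil.pow_of_pos hmk
      have c1 : Commute (algebraMap ℂ (Module.End ℂ W) μ ^ m) (N ^ (k - m)) :=
        (Algebra.commute_algebraMap_left μ (N ^ (k - m))).pow_left m
      have c3 : Commute (algebraMap ℂ (Module.End ℂ W) μ ^ m * N ^ (k - m)) ((k.choose m : Module.End ℂ W)) :=
        Nat.commute_cast _ _
      have hnil' : IsNilpotent (algebraMap ℂ (Module.End ℂ W) μ ^ m * N ^ (k - m) * (k.choose m : Module.End ℂ W)) :=
        c3.isNilpotent_mul_right (c1.isNilpotent_mul_left h1)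
      exact (LinearMap.isNilpotent_trace_of_isNilpotent hnil').eq_zero
    rw [Finset.sum_congr rfl hzero, Finset.sum_const, smul_zero, zero_add]
    simp only [Nat.sub_self, pow_zero, mul_one, Nat.choose_self, Nat.cast_one]
    rw [← map_pow, Algebra.algebraMap_eq_smul_one, map_smul, trace_one]
    simp [smul_eq_mul]
  have hmapsAk : ∀ (k : ℕ) (μ : ℂ), ∀ x ∈ A.maxGenEigenspace μ, (A ^ k) x ∈ A.maxGenEigenspace μ :=
    fun k μ x hx => Module.End.mapsTo_maxGenEigenspace_of_comm ((Commute.refl A).pow_right k) μ hx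
  have htr : ∀ k : ℕ, LinearMap.trace ℂ V (A ^ k)
      = ∑ μ ∈ hFin.toFinset, μ ^ k * (finrank ℂ (A.maxGenEigenspace μ) : ℂ) := by
    intro k
    rw [LinearMap.trace_eq_sum_trace_restrict' hInt hFin (fun μ => hmapsAk k μ)]
    refine Finset.sum_congr rfl fun μ _ => ?_
    rw [← key μ k, Module.End.pow_restrict k (hmapsA μ)]
  have hroot : ∀ μ ∈ hFin.toFinset, μ ^ n = 1 := by
    intro μ hμ
    have hW : A.maxGenEigenspace μ ≠ ⊥ := (Set.Finite.mem_toFinset _).mp hμ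
    have hnt : Nontrivial (A.maxGenEigenspace μ) := Submodule.nontrivial_iff_ne_bot.mpr hW
    have hdpos : 0 < finrank ℂ (A.maxGenEigenspace μ) := finrank_pos
    have h1 : (A.restrict (hmapsA μ)) ^ n = 1 := by
      rw [Module.End.pow_restrict n (hmapsA μ)]
      ext x
      simp [LinearMap.restrict_apply, hA]
    have h2 := key μ n
    rw [h1, LinearMap.trace_one] at h2
    have hd : ((finrank ℂ (A.maxGenEigenspace μ) : ℂ)) ≠ 0 := Nat.cast_ne_zero.mpr hdpos.ne'
    have h3 : μ ^ n * (finrank ℂ (A.maxGenEigenspace μ) : ℂ)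
        = 1 * (finrank ℂ (A.maxGenEigenspace μ) : ℂ) := by rw [one_mul, ← h2]
    exact mul_right_cancel₀ hd h3
  refine ⟨hFin.toFinset.val.bind (fun μ => Multiset.replicate (finrank ℂ (A.maxGenEigenspace μ)) μ), ?_, ?_⟩
  · intro μ hμ
    rw [Multiset.mem_bind] at hμ
    obtain ⟨ν, hν, hrep⟩ := hμ
    rw [Multiset.eq_of_mem_replicate hrep]
    exact hroot ν hν
  · intro k
    rw [htr k, Multiset.map_bind, Multiset.sum_bind]
    rw [Finset.sum]
    congr 1
    apply Multiset.map_congr rfl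
    intro ν _
    simp [Multiset.map_replicate, Multiset.sum_replicate, nsmul_eq_mul, mul_comm]

lemma aux_char_pow {G : Type} [Group G] [Fintype G] (V : FDRep ℂ G) (g : G) :
    ∃ D : Multiset ℂ, (∀ μ ∈ D, μ ^ Fintype.card G = 1) ∧
      ∀ k : ℕ, V.character (g ^ k) = (D.map (· ^ k)).sum := by
  obtain ⟨D, h1, h2⟩ := aux_trace_pow (V.ρ g) Fintype.card_pos
    (by rw [← map_pow, pow_card_eq_one, map_one])
  refine ⟨D, h1, fun k => ?_⟩
  rw [FDRep.character, map_pow]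
  exact h2 k



open ComplexOrder in
/-- Theorem 4.2 (Zhmud): an S-character of a finite group distinct from the constant
character `1` has a zero. Here an S-character is a virtual character (difference of
characters of two finite-dimensional complex representations) taking nonnegative real
values, whose mean over the group is `1`. -/
theorem stmt_4 {G : Type} [Group G] [Fintype G] (f : G → ℂ)
    (hvirt : ∃ V W : FDRep ℂ G, ∀ g, f g = V.character g - W.character g)
    (hpos : ∀ g, 0 ≤ f g)
    (hmean : (1 / (Fintype.card G : ℂ)) * ∑ g, f g = 1)
    (hne : f ≠ fun _ => 1) :
    ∃ g : G, f g = 0 := by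
  classical
  by_contra hno
  push_neg at hno
  obtain ⟨V, W, hVW⟩ := hvirt
  set n := Fintype.card G with hn
  have hn0 : 0 < n := Fintype.card_pos
  haveI : NeZero n := ⟨hn0.ne'⟩
  have hnz : (n : ℂ) ≠ 0 := Nat.cast_ne_zero.mpr hn0.ne'
  -- real positivity
  have him : ∀ g, (f g).im = 0 := fun g => ((Complex.le_def.mp (hpos g)).2).symm
  have hre : ∀ g, f g = (((f g).re : ℝ) : ℂ) := fun g => Complex.ext (by simp) (by simp [him g])
  set F : G → ℝ := fun g => (f g).re with hF
  have hFpos : ∀ g, 0 < F g := by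
    intro g
    rcases lt_or_eq_of_le (by simpa using (Complex.le_def.mp (hpos g)).1) with h | h
    · exact h
    · exact absurd (by rw [hre g, ← h]; simp) (hno g)
  have hsumC : ∑ g, f g = (n : ℂ) := by
    field_simp at hmean
    exact hmean
  have hsum : ∑ g, F g = (n : ℝ) := by
    have : ((∑ g, F g : ℝ) : ℂ) = ((n : ℝ) : ℂ) := by
      push_cast
      rw [← hsumC]
      exact (Finset.sum_congr rfl fun g _ => (hre g).symm)
    exact_mod_cast this
  -- spectral data
  choose DV hDV1 hDV2 using fun g => aux_char_pow V g
  choose DW hDW1 hDW2 using fun g => aux_char_pow W g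
  have hfk : ∀ (g : G) (k : ℕ),
      f (g ^ k) = ((DV g).map (· ^ k)).sum - ((DW g).map (· ^ k)).sum := fun g k => by
    rw [hVW, hDV2, hDW2]
  -- integrality of values
  have hint : ∀ g, f g ∈ integralClosure ℤ ℂ := by
    intro g
    have hroot : ∀ (D : Multiset ℂ), (∀ μ ∈ D, μ ^ n = 1) → D.sum ∈ integralClosure ℤ ℂ := by
      intro D hD
      refine Subalgebra.multiset_sum_mem _ fun μ hμ => ?_
      refine ⟨Polynomial.X ^ n - Polynomial.C 1, Polynomial.monic_X_pow_sub_C 1 hn0.ne', ?_⟩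
      simp [hD μ hμ]
    have h1 := hfk g 1
    simp only [pow_one, Multiset.map_id'] at h1
    rw [h1]
    exact sub_mem (hroot _ (hDV1 g)) (hroot _ (hDW1 g))
  -- the cyclotomic field
  let np : ℕ+ := ⟨n, hn0⟩
  let K := CyclotomicField np ℚ
  haveI : NeZero (np : ℕ) := ⟨np.ne_zero⟩
  haveI : NeZero ((np : ℕ) : ℚ) := ⟨by exact_mod_cast np.ne_zero⟩
  haveI : IsCyclotomicExtension {(np : ℕ)} ℚ K := CyclotomicField.isCyclotomicExtension _ _
  haveI : FiniteDimensional ℚ K := IsCyclotomicExtension.finiteDimensional {(np : ℕ)} ℚ K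
  haveI : IsGalois ℚ K := IsCyclotomicExtension.isGalois {(np : ℕ)} ℚ K
  haveI : Algebra.IsAlgebraic ℚ K := Algebra.IsAlgebraic.of_finite ℚ K
  let ι : K →ₐ[ℚ] ℂ := IsAlgClosed.lift
  have hι : Function.Injective ι := ι.toRingHom.injective
  set ζ : K := IsCyclotomicExtension.zeta (np : ℕ) ℚ K with hζdef
  have hζ : IsPrimitiveRoot ζ n := IsCyclotomicExtension.zeta_spec (np : ℕ) ℚ K
  have hζC : IsPrimitiveRoot (ι ζ) n := hζ.map_of_injective hι
  -- lifting roots of unity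
  have hL0 : ∀ μ : ℂ, μ ^ n = 1 → ∃ a : ℕ, ι (ζ ^ a) = μ := by
    intro μ hμ
    obtain ⟨i, _, hi⟩ := hζC.eq_pow_of_pow_eq_one hμ
    exact ⟨i, by rw [map_pow]; exact hi⟩
  set L : ℂ → K := fun μ => if h : μ ^ n = 1 then ζ ^ (hL0 μ h).choose else 1 with hLdef
  have hLι : ∀ μ, μ ^ n = 1 → ι (L μ) = μ := by
    intro μ h
    simp only [hLdef, dif_pos h]
    exact (hL0 μ h).choose_spec
  have hLpow : ∀ μ, ∃ a : ℕ, L μ = ζ ^ a := by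
    intro μ
    simp only [hLdef]
    split
    · exact ⟨_, rfl⟩
    · exact ⟨0, by simp⟩
  set y : G → K := fun g => ((DV g).map L).sum - ((DW g).map L).sum with hy
  have hyι : ∀ g, ι (y g) = f g := by
    intro g
    have h1 := hfk g 1
    simp only [pow_one] at h1
    rw [hy, map_sub, map_multiset_sum, map_multiset_sum, Multiset.map_map, Multiset.map_map, h1]
    simp only [Function.comp_def]
    congr 1
    · exact congrArg Multiset.sum (Multiset.map_congr rfl fun μ hμ => hLι μ (hDV1 g μ hμ))
    · exact congrArg Multiset.sum (Multiset.map_congr rfl fun μ hμ => hLι μ (hDW1 g μ hμ))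
  set P : K := ∏ g : G, y g with hP
  have hfix : ∀ σ : K ≃ₐ[ℚ] K, σ P = P := by
    intro σ
    have hσζ : IsPrimitiveRoot (σ ζ) n := hζ.map_of_injective σ.injective
    obtain ⟨k, hklt, hk⟩ := hζ.eq_pow_of_pow_eq_one hσζ.pow_eq_one
    have hcop : Nat.Coprime k n := by
      rw [← hk] at hσζ
      exact (hζ.pow_iff_coprime hn0 k).mp hσζ
    have hLσ : ∀ μ : ℂ, σ (L μ) = (L μ) ^ k := by
      intro μ
      obtain ⟨a, ha⟩ := hLpow μ
      rw [ha, map_pow, ← hk, pow_right_comm]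
    have hyσ : ∀ g : G, ι (σ (y g)) = f (g ^ k) := by
      intro g
      rw [hy]
      simp only
      rw [map_sub, map_sub, map_multiset_sum, map_multiset_sum, map_multiset_sum,
        map_multiset_sum, Multiset.map_map, Multiset.map_map, Multiset.map_map,
        Multiset.map_map, hfk g k]
      simp only [Function.comp_def]
      congr 1
      · refine congrArg Multiset.sum (Multiset.map_congr rfl fun μ hμ => ?_)
        rw [hLσ μ, map_pow, hLι μ (hDV1 g μ hμ)]
      · refine congrArg Multiset.sum (Multiset.map_congr rfl fun μ hμ => ?_)
        rw [hLσ μ, map_pow, hLι μ (hDW1 g μ hμ)]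
    have hstep : ∀ g : G, σ (y g) = y (g ^ k) := fun g => hι (by rw [hyσ g, hyι (g ^ k)])
    have hcop' : (Nat.card G).Coprime k := by
      rw [Nat.card_eq_fintype_card, ← hn]
      exact hcop.symm
    calc σ P = ∏ g : G, σ (y g) := map_prod σ y Finset.univ
    _ = ∏ g : G, y (g ^ k) := Finset.prod_congr rfl fun g _ => hstep g
    _ = P := Equiv.prod_comp (powCoprime hcop') y
  -- P is rational
  have hPbot : P ∈ (⊥ : IntermediateField ℚ K) := by
    have hfield : IntermediateField.fixedField (⊤ : Subgroup (K ≃ₐ[ℚ] K)) = ⊥ := by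
      rw [← IntermediateField.fixingSubgroup_bot (F := ℚ) (E := K)]
      exact IsGalois.fixedField_fixingSubgroup ⊥
    rw [← hfield]
    exact fun σ => hfix σ.1
  obtain ⟨q, hq⟩ := IntermediateField.mem_bot.mp hPbot
  -- value of P in ℂ
  have hval : ((q : ℂ)) = ∏ g : G, f g := by
    have h1 : ι P = ∏ g : G, f g := by
      rw [hP, map_prod]
      exact Finset.prod_congr rfl fun g _ => hyι g
    rw [← h1, ← hq]
    simp [ι.commutes]
  -- q is an integer
  have hqint : IsIntegral ℤ q := by
    have h2 : IsIntegral ℤ ((q : ℂ)) := by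
      rw [hval]
      exact (Subalgebra.prod_mem _ fun g _ => hint g)
    have h2' : IsIntegral ℤ (((Algebra.ofId ℚ ℂ).restrictScalars ℤ) q) := by
      convert h2 using 2
      simp
    exact (isIntegral_algHom_iff ((Algebra.ofId ℚ ℂ).restrictScalars ℤ)
      (fun a b hab => (algebraMap ℚ ℂ).injective hab)).mp h2'
  obtain ⟨z, hz0⟩ := IsIntegrallyClosed.isIntegral_iff.mp hqint
  have hz : ((z : ℤ) : ℚ) = q := by rw [← hz0]; simp
  -- product of F values
  have hprodF : (q : ℝ) = ∏ g, F g := by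
    have hC : ((q : ℝ) : ℂ) = (((∏ g, F g : ℝ)) : ℂ) := by
      push_cast
      rw [hval]
      exact Finset.prod_congr rfl fun g _ => hre g
    exact_mod_cast hC
  have hprodpos : 0 < ∏ g, F g := Finset.prod_pos fun g _ => hFpos g
  have hq1 : 1 ≤ ∏ g, F g := by
    have hqpos : 0 < (q : ℝ) := by rw [hprodF]; exact hprodpos
    have hzq : (0:ℚ) < q := by exact_mod_cast hqpos
    have hz0 : (0:ℤ) < z := by
      have : (0:ℚ) < ((z:ℤ):ℚ) := by rw [hz]; exact hzq
      exact_mod_cast this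
    have hz1 : (1:ℤ) ≤ z := hz0
    have : (1:ℝ) ≤ (q:ℝ) := by
      have h1 : ((1:ℤ):ℚ) ≤ ((z:ℤ):ℚ) := by exact_mod_cast hz1
      rw [hz] at h1
      exact_mod_cast h1
    rw [hprodF] at this
    exact this
  -- the AM-GM / log contradiction
  have hex : ∃ g : G, F g ≠ 1 := by
    by_contra hall
    push_neg at hall
    exact hne (funext fun g => by rw [hre g, show (f g).re = F g from rfl, hall g]; simp)
  obtain ⟨g0, hg0⟩ := hex
  have hlt : ∑ g, Real.log (F g) < ∑ g, (F g - 1) := by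
    refine Finset.sum_lt_sum (fun g _ => Real.log_le_sub_one_of_pos (hFpos g)) ?_
    exact ⟨g0, Finset.mem_univ _, Real.log_lt_sub_one_of_pos (hFpos g0) hg0⟩
  have hzero : ∑ g, (F g - 1) = (0 : ℝ) := by
    rw [Finset.sum_sub_distrib, hsum]
    simp [hn]
  have hlog : Real.log (∏ g, F g) = ∑ g, Real.log (F g) :=
    Real.log_prod fun g _ => (hFpos g).ne'
  have : (0 : ℝ) ≤ Real.log (∏ g, F g) := Real.log_nonneg hq1
  rw [hlog] at this
  rw [hzero] at hlt
  linarith
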